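/- Same-sign equal-exponent sum (Lemma SE-S5): if x and y are nonzero precision-p binary floating-point numbers with the same sign and equal exponents e_x = e_y, then s := RNE(x + y) is nonzero with the same sign as x and exponent e_s = e_x + 1, and the rounding error e := (x + y) - s is either zero or a nonzero floating-point number with exponent e_e = e_x - (p - 1). -/
import Mathlib


/-- t is representable in precision-p binary floating-point arithmetic. -/
def FpRep (p : ℕ) (t : ℝ) : Prop :=
  ∃ (m g : ℤ), |m| < (2 : ℤ) ^ p ∧ t = (m : ℝ) * (2 : ℝ) ^ g

/-- x is a nonzero precision-p binary float with exponent e. -/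
def FpVal (p : ℕ) (e : ℤ) (x : ℝ) : Prop :=
  ∃ m : ℤ, (2 : ℤ) ^ (p - 1) ≤ |m| ∧ |m| < (2 : ℤ) ^ p ∧
    x = (m : ℝ) * (2 : ℝ) ^ (e - ((p : ℤ) - 1))

/-- R rounds to a nearest precision-p floating-point number. -/
def IsRNE (p : ℕ) (R : ℝ → ℝ) : Prop :=
  ∀ t : ℝ, FpRep p (R t) ∧ ∀ z : ℝ, FpRep p z → |t - R t| ≤ |t - z|

/-- Lemma SE-S5: same sign and equal exponents ⟹ the rounded sum s is nonzero
with the same sign as x and exponent e_x + 1, and the rounding error is zero or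
a nonzero float with exponent e_x - (p - 1). -/
theorem same_sign_equal_exponent_sum (p : ℕ) (hp : 1 ≤ p)
    (R : ℝ → ℝ) (hR : IsRNE p R) (x y : ℝ) (ex : ℤ)
    (hx : FpVal p ex x) (hy : FpVal p ex y) (hsign : 0 < x * y) :
    R (x + y) ≠ 0 ∧ 0 < x * R (x + y) ∧
      (2 : ℝ) ^ (ex + 1) ≤ |R (x + y)| ∧ |R (x + y)| < (2 : ℝ) ^ (ex + 2) ∧
      ((x + y) - R (x + y) = 0 ∨
        (FpRep p ((x + y) - R (x + y)) ∧
          (2 : ℝ) ^ (ex - ((p : ℤ) - 1)) ≤ |(x + y) - R (x + y)| ∧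
          |(x + y) - R (x + y)| < (2 : ℝ) ^ (ex - ((p : ℤ) - 1) + 1))) := by
  obtain ⟨mx, hmx1, hmx2, hxe⟩ := hx
  obtain ⟨my, hmy1, hmy2, hye⟩ := hy
  set b : ℤ := ex - ((p : ℤ) - 1) with hb
  set u : ℝ := (2 : ℝ) ^ b with hu
  have hupos : (0 : ℝ) < u := zpow_pos (by norm_num) b
  -- the mantissas have the same sign
  have hmm : 0 < mx * my := by
    have h : (0 : ℝ) < ((mx * my : ℤ) : ℝ) := by
      have h2 : (0 : ℝ) < ((mx : ℝ) * (my : ℝ)) * (u * u) := by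
        have := hsign
        rw [hxe, hye] at this
        calc (0:ℝ) < (mx : ℝ) * (2:ℝ)^b * ((my : ℝ) * (2:ℝ)^b) := this
          _ = ((mx : ℝ) * (my : ℝ)) * (u * u) := by rw [hu]; ring
      push_cast
      nlinarith [mul_pos hupos hupos]
    exact_mod_cast h
  set M : ℤ := mx + my with hM
  have hP : (2 : ℤ) ^ p = 2 * 2 ^ (p - 1) := by
    rw [← pow_succ']
    congr 1
    omega
  -- bounds on |M| and sign fact
  obtain ⟨hM1, hM2, hxM⟩ : (2:ℤ) ^ p ≤ |M| ∧ |M| ≤ 2 * 2 ^ p - 2 ∧ 0 < mx * M := by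
    rcases mul_pos_iff.mp hmm with ⟨h1, h2⟩ | ⟨h1, h2⟩
    · have hax : |mx| = mx := abs_of_pos h1
      have hay : |my| = my := abs_of_pos h2
      have haM : |M| = M := abs_of_pos (by rw [hM]; linarith)
      refine ⟨?_, ?_, ?_⟩
      · rw [haM, hM, hP]; rw [hax] at hmx1; rw [hay] at hmy1; linarith
      · rw [haM, hM]; rw [hax] at hmx2; rw [hay] at hmy2; linarith
      · rw [hM]; nlinarith
    · have hax : |mx| = -mx := abs_of_neg h1
      have hay : |my| = -my := abs_of_neg h2
      have haM : |M| = -M := abs_of_neg (by rw [hM]; linarith)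
      refine ⟨?_, ?_, ?_⟩
      · rw [haM, hM, hP]; rw [hax] at hmx1; rw [hay] at hmy1; linarith
      · rw [haM, hM]; rw [hax] at hmx2; rw [hay] at hmy2; linarith
      · rw [hM]; nlinarith
  have ht : x + y = ((M : ℤ) : ℝ) * u := by
    rw [hxe, hye, hM, hu]; push_cast; ring
  -- sign of x * (x+y)
  have hxt : 0 < x * (x + y) := by
    have hc : (0 : ℝ) < ((mx * M : ℤ) : ℝ) := by exact_mod_cast hxM
    have : x * (x + y) = ((mx * M : ℤ) : ℝ) * (u * u) := by
      rw [ht, hxe, hu]; push_cast; ring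
    rw [this]
    exact mul_pos hc (mul_pos hupos hupos)
  obtain ⟨hsrep, hsnear⟩ := hR (x + y)
  set s : ℝ := R (x + y) with hs
  set A : ℝ := (((2:ℤ) ^ p : ℤ) : ℝ) * u with hA
  have hApos : 0 < A := by
    apply mul_pos _ hupos
    exact_mod_cast pow_pos (by norm_num : (0:ℤ) < 2) p
  have hE1 : (2 : ℝ) ^ (ex + 1) = A := by
    rw [hA, hu]
    push_cast
    rw [← zpow_natCast (2:ℝ) p, ← zpow_add₀ (by norm_num : (2:ℝ) ≠ 0)]
    congr 1
    omega
  have hE2 : (2 : ℝ) ^ (ex + 2) = 2 * A := by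
    have h : (2:ℝ) * A = (2:ℝ) ^ ((1:ℤ)) * ((2:ℝ) ^ ((p:ℤ)) * u) := by
      rw [hA]
      push_cast
      rw [← zpow_natCast (2:ℝ) p]
      norm_num
    rw [h, hu, ← zpow_add₀ (by norm_num : (2:ℝ) ≠ 0), ← zpow_add₀ (by norm_num : (2:ℝ) ≠ 0)]
    congr 1
    omega
  have habs_t : |x + y| = ((|M| : ℤ) : ℝ) * u := by
    rw [ht, abs_mul, abs_of_pos hupos, Int.cast_abs]
  rcases Int.even_or_odd M with ⟨k, hk⟩ | ⟨k, hk⟩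
  · -- M even : x + y is representable, s = x + y
    have hkb : |k| < (2:ℤ) ^ p := by
      have h2k : |M| = 2 * |k| := by rw [hk, show k + k = 2 * k from by ring, abs_mul]; norm_num
      rw [h2k] at hM2
      omega
    have htrep : FpRep p (x + y) := by
      refine ⟨k, b + 1, hkb, ?_⟩
      rw [ht, hk, zpow_add_one₀ (by norm_num : (2:ℝ) ≠ 0)]
      push_cast
      ring
    have hst : s = x + y := by
      have h := hsnear (x + y) htrep
      rw [sub_self, abs_zero] at h
      have h2 := abs_nonpos_iff.mp h
      linarith [sub_eq_zero.mp h2]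
    have hsabs : |s| = ((|M| : ℤ) : ℝ) * u := by rw [hst, habs_t]
    have hl : A ≤ |s| := by
      rw [hsabs, hA]
      have : (((2:ℤ)^p : ℤ) : ℝ) ≤ ((|M| : ℤ) : ℝ) := by exact_mod_cast hM1
      exact mul_le_mul_of_nonneg_right this hupos.le
    have hup : |s| < 2 * A := by
      rw [hsabs, hA]
      have h1 : ((|M| : ℤ) : ℝ) < 2 * (((2:ℤ)^p : ℤ) : ℝ) := by
        exact_mod_cast lt_of_le_of_lt hM2 (by linarith [pow_pos (by norm_num : (0:ℤ) < 2) p] : (2:ℤ) * 2^p - 2 < 2 * 2^p)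
      nlinarith
    refine ⟨?_, ?_, ?_, ?_, Or.inl ?_⟩
    · intro h0
      rw [h0, abs_zero] at hl
      linarith
    · rw [hst]; exact hxt
    · rw [hE1]; exact hl
    · rw [hE2]; exact hup
    · rw [hst]; ring
  · -- M odd
    have hM1' : (2:ℤ) ^ p + 1 ≤ |M| := by
      rcases abs_cases M with ⟨h, _⟩ | ⟨h, _⟩ <;> rw [h] at hM1 ⊢ <;> omega
    have hM2' : |M| ≤ 2 * 2 ^ p - 3 := by
      rcases abs_cases M with ⟨h, _⟩ | ⟨h, _⟩ <;> rw [h] at hM2 ⊢ <;> omega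
    have hkb : |k| < (2:ℤ) ^ p := by
      rcases abs_cases M with ⟨h, _⟩ | ⟨h, _⟩ <;> rw [h] at hM2 <;> rw [hk] at hM2 <;>
        rcases abs_cases k with ⟨h2, _⟩ | ⟨h2, _⟩ <;> rw [h2] <;> omega
    have hzrep : FpRep p ((k : ℝ) * (2:ℝ) ^ (b + 1)) := ⟨k, b + 1, hkb, rfl⟩
    have htz : (x + y) - (k : ℝ) * (2:ℝ) ^ (b + 1) = u := by
      rw [ht, hk, zpow_add_one₀ (by norm_num : (2:ℝ) ≠ 0), hu]
      push_cast
      ring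
    have herr : |(x + y) - s| ≤ u := by
      have h := hsnear _ hzrep
      rw [htz, abs_of_pos hupos] at h
      exact h
    -- |t| bounds
    have htl : A + u ≤ |x + y| := by
      rw [habs_t]
      have h1 : (((2:ℤ)^p + 1 : ℤ) : ℝ) * u ≤ ((|M| : ℤ) : ℝ) * u :=
        mul_le_mul_of_nonneg_right (by exact_mod_cast hM1') hupos.le
      calc A + u = (((2:ℤ)^p + 1 : ℤ) : ℝ) * u := by rw [hA]; push_cast; ring
        _ ≤ _ := h1
    have htu : |x + y| ≤ 2 * A - 3 * u := by
      rw [habs_t]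
      have h1 : ((|M| : ℤ) : ℝ) * u ≤ ((2 * 2^p - 3 : ℤ) : ℝ) * u :=
        mul_le_mul_of_nonneg_right (by exact_mod_cast hM2') hupos.le
      calc ((|M| : ℤ) : ℝ) * u ≤ ((2 * 2^p - 3 : ℤ) : ℝ) * u := h1
        _ = 2 * A - 3 * u := by rw [hA]; push_cast; ring
    have hsl : A ≤ |s| := by
      have h := abs_sub_abs_le_abs_sub (x + y) s
      linarith
    have hsu : |s| < 2 * A := by
      have h := abs_sub_abs_le_abs_sub s (x + y)
      rw [abs_sub_comm] at h
      linarith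
    have hsne : s ≠ 0 := by
      intro h0
      rw [h0, abs_zero] at hsl
      linarith
    -- sign of x * s
    have hts : 0 < (x + y) * s := by
      have h1 : ((x + y) - s) ^ 2 ≤ u ^ 2 := by
        have h := abs_le.mp herr
        exact sq_le_sq' h.1 h.2
      have h2 : (A + u) ^ 2 ≤ (x + y) ^ 2 := by
        rw [← sq_abs (x + y)]
        exact pow_le_pow_left₀ (by positivity) htl 2
      have h3 : A ^ 2 ≤ s ^ 2 := by
        rw [← sq_abs s]
        exact pow_le_pow_left₀ hApos.le hsl 2
      nlinarith [mul_pos hApos hApos, mul_pos hApos hupos]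
    have hxs : 0 < x * s := by
      have htne : (x + y) ≠ 0 := by
        intro h0
        rw [h0, abs_zero] at htl
        linarith
      have ht2 : 0 < (x + y) ^ 2 := by positivity
      have key : 0 < (x * s) * (x + y) ^ 2 := by
        calc (0:ℝ) < (x * (x + y)) * ((x + y) * s) := mul_pos hxt hts
          _ = (x * s) * (x + y) ^ 2 := by ring
      have heq : x * s = (x * s) * (x + y) ^ 2 / (x + y) ^ 2 :=
        (mul_div_cancel_right₀ _ (ne_of_gt ht2)).symm
      rw [heq]
      exact div_pos key ht2
    -- s is an integer multiple of u
    obtain ⟨m, g, hmlt, hseq⟩ := hsrep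
    have hg : b ≤ g := by
      by_contra hgc
      push_neg at hgc
      have hgle : g ≤ b - 1 := by omega
      have h1 : |s| < (((2:ℤ)^p : ℤ) : ℝ) * (2:ℝ) ^ g := by
        rw [hseq, abs_mul, abs_of_pos (zpow_pos (by norm_num : (0:ℝ) < 2) g)]
        apply mul_lt_mul_of_pos_right _ (zpow_pos (by norm_num) g)
        have : ((|m| : ℤ) : ℝ) < (((2:ℤ)^p : ℤ) : ℝ) := by exact_mod_cast hmlt
        rw [Int.cast_abs] at this
        exact this
      have h2 : (2:ℝ) ^ g ≤ (2:ℝ) ^ (b - 1) := by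
        exact zpow_le_zpow_right₀ (by norm_num) hgle
      have h3 : (((2:ℤ)^p : ℤ) : ℝ) * (2:ℝ) ^ (b - 1) * 2 = A := by
        rw [hA, hu, mul_assoc]
        congr 1
        rw [show (2:ℝ)^(b-1) * 2 = (2:ℝ)^(b-1+1) from (zpow_add_one₀ (by norm_num) _).symm]
        congr 1
        omega
      have hcA : (0:ℝ) < (((2:ℤ)^p : ℤ) : ℝ) := by
        exact_mod_cast pow_pos (by norm_num : (0:ℤ) < 2) p
      have h4 : (((2:ℤ)^p : ℤ) : ℝ) * (2:ℝ) ^ g ≤ (((2:ℤ)^p : ℤ) : ℝ) * (2:ℝ) ^ (b - 1) :=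
        mul_le_mul_of_nonneg_left h2 hcA.le
      linarith
    set n : ℤ := m * 2 ^ (g - b).toNat with hn
    have hsn : s = (n : ℝ) * u := by
      rw [hseq, hn, hu]
      push_cast
      rw [mul_assoc, show ((2:ℝ) ^ (g - b).toNat) = (2:ℝ) ^ ((g - b : ℤ)) from by
        rw [← zpow_natCast]; congr 1; omega]
      rw [← zpow_add₀ (by norm_num : (2:ℝ) ≠ 0)]
      congr 2
      omega
    have herr_eq : (x + y) - s = ((M - n : ℤ) : ℝ) * u := by
      rw [ht, hsn]; push_cast; ring
    by_cases hMn : M = n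
    · refine ⟨hsne, hxs, by rw [hE1]; exact hsl, by rw [hE2]; exact hsu, Or.inl ?_⟩
      rw [herr_eq, hMn]
      simp
    · have hd1 : (1:ℤ) ≤ |M - n| := by
        rcases abs_cases (M - n) with ⟨h, _⟩ | ⟨h, _⟩ <;> omega
      have herrabs : |(x + y) - s| = ((|M - n| : ℤ) : ℝ) * u := by
        rw [herr_eq, abs_mul, abs_of_pos hupos, Int.cast_abs]
      have hd2 : |M - n| ≤ 1 := by
        by_contra hc
        push_neg at hc
        have h2 : (2:ℤ) ≤ |M - n| := hc
        have : (2:ℝ) * u ≤ ((|M - n| : ℤ) : ℝ) * u :=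
          mul_le_mul_of_nonneg_right (by exact_mod_cast h2) hupos.le
        rw [← herrabs] at this
        linarith
      have hdeq : |M - n| = 1 := le_antisymm hd2 hd1
      refine ⟨hsne, hxs, by rw [hE1]; exact hsl, by rw [hE2]; exact hsu, Or.inr ⟨?_, ?_, ?_⟩⟩
      · refine ⟨M - n, b, ?_, by rw [herr_eq, hu]⟩
        rw [hdeq, hP]
        have := pow_pos (by norm_num : (0:ℤ) < 2) (p - 1)
        omega
      · rw [herrabs, hdeq]
        push_cast
        linarith
      · rw [herrabs, hdeq]
        rw [zpow_add_one₀ (by norm_num : (2:ℝ) ≠ 0), ← hu]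
        push_cast
        linarith
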